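/- Let h be a compact Lie algebra, V an irreducible nontrivial real representation of h with dim V = 2, and r ≥ 0 with dim(V ⊕ ℝʳ) = 4n, n ≥ 2. Then h (necessarily isomorphic to u(1) ≅ ℝ acting by rotations on V) does not preserve any orthogonal quaternionic structure on V ⊕ ℝʳ: there is no injective Lie algebra homomorphism h → sp(n) ⊕ sp(1) ⊂ so(4n) whose induced representation on ℝ^{4n} decomposes as V ⊕ ℝʳ. -/

import Mathlib

open scoped InnerProductSpace

attribute [local instance 100] LieRing.ofAssociativeRing

private lemma quat_aux {W : Type*} [NormedAddCommGroup W] [InnerProductSpace ℝ W]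
    [FiniteDimensional ℝ W]
    (U : Submodule ℝ W) (s A B : W →ₗ[ℝ] W) (cA cB : ℝ) (hcA : cA ≠ 0) (hcB : cB ≠ 0)
    (hAA : ∀ z, A (A z) = -cA • z) (hBB : ∀ z, B (B z) = -cB • z)
    (hanti : ∀ z, A (B z) = -(B (A z)))
    (hsB : ∀ z, s (B z) = B (s z))
    (hsU : ∀ w ∈ U, s w = -(A w))
    (hdimU : Module.finrank ℝ W < 2 * Module.finrank ℝ U) : False := by
  have hBinj : Function.Injective B := by
    intro z1 z2 h
    have h0 : B (z1 - z2) = 0 := by rw [map_sub, h, sub_self]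
    have h1 := hBB (z1 - z2)
    rw [h0, map_zero] at h1
    rcases smul_eq_zero.mp h1.symm with h2 | h2
    · exact absurd (neg_eq_zero.mp h2) hcB
    · exact sub_eq_zero.mp h2
  set M : Submodule ℝ W := U.map B with hM
  have hMdim : Module.finrank ℝ M = Module.finrank ℝ U :=
    (Submodule.equivMapOfInjective B hBinj U).finrank_eq.symm
  have hsup := Submodule.finrank_sup_add_finrank_inf_eq U M
  have hle : Module.finrank ℝ (U ⊔ M : Submodule ℝ W) ≤ Module.finrank ℝ W :=
    Submodule.finrank_le _
  have hpos : 0 < Module.finrank ℝ (U ⊓ M : Submodule ℝ W) := by omega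
  have hne : (U ⊓ M : Submodule ℝ W) ≠ ⊥ := by
    intro h
    rw [h, finrank_bot] at hpos
    exact lt_irrefl 0 hpos
  obtain ⟨w, hwmem, hw0⟩ := Submodule.ne_bot_iff _ |>.mp hne
  obtain ⟨hwU, hwM⟩ := Submodule.mem_inf.mp hwmem
  obtain ⟨u, huU, huw⟩ := Submodule.mem_map.mp hwM
  have e1 : s w = -(A w) := hsU w hwU
  have e2 : s w = A w := by
    rw [← huw, hsB, hsU u huU, map_neg, ← hanti]
  have e3 : A w = 0 := by
    have h := e1.symm.trans e2
    have h2 : (2:ℝ) • A w = 0 := by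
      rw [two_smul]; nth_rewrite 1 [← h]; exact neg_add_cancel (A w)
    rcases smul_eq_zero.mp h2 with h3 | h3
    · norm_num at h3
    · exact h3
  have e4 : -cA • w = 0 := by rw [← hAA, e3, map_zero]
  rcases smul_eq_zero.mp e4 with h | h
  · exact hcA (neg_eq_zero.mp h)
  · exact hw0 h

set_option maxHeartbeats 1000000 in
/-- Let `h` (here `L`) be a Lie algebra acting by skew-symmetric endomorphisms
on a Euclidean space `W = V ⊕ ℝʳ` of dimension `4n`, `n ≥ 2`, where the invariant subspace
`V` has dimension 2 and carries a nontrivial irreducible action, while the action on the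
orthogonal complement `ℝʳ = Vᗮ` is trivial.  Then the action cannot preserve an orthogonal
quaternionic structure on `W`: there is no injective map of `h` into `sp(n) ⊕ sp(1)`
inducing this representation.  Formally, given a quaternionic structure `(J₁,J₂,J₃)` on `W`
and an injective `π` landing in `sp(n) ⊕ sp(1)`, we derive a contradiction. -/
theorem stmt_17 {L : Type*} [LieRing L] [LieAlgebra ℝ L]
    {W : Type*} [NormedAddCommGroup W] [InnerProductSpace ℝ W] [FiniteDimensional ℝ W]
    (π : L →ₗ⁅ℝ⁆ Module.End ℝ W)
    (hinj : Function.Injective π)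
    (hskew : ∀ (x : L) (v w : W), ⟪π x v, w⟫_ℝ = -⟪v, π x w⟫_ℝ)
    (Vs : Submodule ℝ W) (hV2 : Module.finrank ℝ Vs = 2)
    (hinv : ∀ (x : L), ∀ v ∈ Vs, π x v ∈ Vs)
    (htriv : ∀ (x : L), ∀ w ∈ Vsᗮ, π x w = 0)
    (hirr : ∀ U : Submodule ℝ W, U ≤ Vs → (∀ (x : L), ∀ v ∈ U, π x v ∈ U) →
      U = ⊥ ∨ U = Vs)
    (hnontriv : ∃ (x : L), ∃ v ∈ Vs, π x v ≠ 0)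
    (n r : ℕ) (hn : 2 ≤ n) (hr : Module.finrank ℝ Vsᗮ = r)
    (hdim : Module.finrank ℝ W = 4 * n)
    (J1 J2 J3 : W →ₗ[ℝ] W)
    (hJ1sq : ∀ w, J1 (J1 w) = -w) (hJ2sq : ∀ w, J2 (J2 w) = -w)
    (hJ3sq : ∀ w, J3 (J3 w) = -w)
    (hJ1o : ∀ v w, ⟪J1 v, J1 w⟫_ℝ = ⟪v, w⟫_ℝ)
    (hJ2o : ∀ v w, ⟪J2 v, J2 w⟫_ℝ = ⟪v, w⟫_ℝ)
    (hJ3o : ∀ v w, ⟪J3 v, J3 w⟫_ℝ = ⟪v, w⟫_ℝ)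
    (hq12 : ∀ w, J1 (J2 w) = J3 w) (hq23 : ∀ w, J2 (J3 w) = J1 w)
    (hq31 : ∀ w, J3 (J1 w) = J2 w)
    -- π lands in sp(n) ⊕ sp(1): π x = σ + a₁ J₁ + a₂ J₂ + a₃ J₃ with σ ∈ sp(n)
    (hsp : ∀ x : L, ∃ (s : W →ₗ[ℝ] W) (a1 a2 a3 : ℝ),
      (∀ w, s (J1 w) = J1 (s w)) ∧ (∀ w, s (J2 w) = J2 (s w)) ∧
      (∀ w, s (J3 w) = J3 (s w)) ∧
      (π x : W →ₗ[ℝ] W) = s + a1 • J1 + a2 • J2 + a3 • J3) :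
    False := by
  obtain ⟨x, v, hvV, hpv⟩ := hnontriv
  obtain ⟨s, a1, a2, a3, hs1, hs2, hs3, hπ⟩ := hsp x
  have hq21 : ∀ w, J2 (J1 w) = -(J3 w) := by
    intro w; rw [← hq23 w, hJ2sq]
  have hq32 : ∀ w, J3 (J2 w) = -(J1 w) := by
    intro w; rw [← hq31 w, hJ3sq]
  have hq13 : ∀ w, J1 (J3 w) = -(J2 w) := by
    intro w; rw [← hq12 w, hJ1sq]
  have hπapp : ∀ w : W, π x w = s w + a1 • J1 w + a2 • J2 w + a3 • J3 w := by
    intro w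
    have h := LinearMap.congr_fun hπ w
    simpa using h
  have hmapV : ∀ w : W, π x w ∈ Vs := by
    intro w
    rw [← Submodule.orthogonal_orthogonal Vs, Submodule.mem_orthogonal]
    intro u hu
    have h1 := hskew x u w
    rw [htriv x u hu] at h1
    simp only [inner_zero_left] at h1
    linarith
  by_cases hz : a1 = 0 ∧ a2 = 0 ∧ a3 = 0
  · obtain ⟨z1, z2, z3⟩ := hz
    subst z1; subst z2; subst z3
    have hπs : ∀ w, π x w = s w := by intro w; simpa using hπapp w
    set p := π x v with hp
    have hp0 : p ≠ 0 := hpv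
    have hpV : p ∈ Vs := hmapV v
    have h1V : J1 p ∈ Vs := by
      have h : J1 p = π x (J1 v) := by rw [hπs (J1 v), hp, hπs v, hs1]
      rw [h]; exact hmapV _
    have h2V : J2 p ∈ Vs := by
      have h : J2 p = π x (J2 v) := by rw [hπs (J2 v), hp, hπs v, hs2]
      rw [h]; exact hmapV _
    set f : Fin 3 → Vs := ![⟨p, hpV⟩, ⟨J1 p, h1V⟩, ⟨J2 p, h2V⟩] with hf
    have hnli : ¬ LinearIndependent ℝ f := by
      intro h
      have hcard := h.fintype_card_le_finrank
      rw [hV2] at hcard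
      simp at hcard
    obtain ⟨g, hgsum, i, hgi⟩ := Fintype.not_linearIndependent_iff.mp hnli
    have E : g 0 • p + g 1 • J1 p + g 2 • J2 p = 0 := by
      have h := congrArg (Subtype.val) hgsum
      simpa [hf, Fin.sum_univ_three] using h
    have E1 : g 0 • J1 p - g 1 • p + g 2 • J3 p = 0 := by
      have h := congrArg J1 E
      simp only [map_add, map_smul, hJ1sq, hq12, map_zero] at h
      linear_combination (norm := module) h
    have E2 : g 0 • J2 p - g 1 • J3 p - g 2 • p = 0 := by
      have h := congrArg J2 E
      simp only [map_add, map_smul, hq21, hJ2sq, map_zero] at h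
      linear_combination (norm := module) h
    have key : (g 0 ^ 2 + g 1 ^ 2 + g 2 ^ 2) • p = 0 := by
      linear_combination (norm := module) g 0 • E - g 1 • E1 - g 2 • E2
    rcases smul_eq_zero.mp key with h | h
    · have e0 : g 0 = 0 := by
        have h' : g 0 ^ 2 = 0 := le_antisymm
          (by nlinarith [sq_nonneg (g 1), sq_nonneg (g 2)]) (sq_nonneg (g 0))
        exact sq_eq_zero_iff.mp h'
      have e1 : g 1 = 0 := by
        have h' : g 1 ^ 2 = 0 := le_antisymm
          (by nlinarith [sq_nonneg (g 0), sq_nonneg (g 2)]) (sq_nonneg (g 1))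
        exact sq_eq_zero_iff.mp h'
      have e2 : g 2 = 0 := by
        have h' : g 2 ^ 2 = 0 := le_antisymm
          (by nlinarith [sq_nonneg (g 0), sq_nonneg (g 1)]) (sq_nonneg (g 2))
        exact sq_eq_zero_iff.mp h'
      fin_cases i <;> first | exact hgi e0 | exact hgi e1 | exact hgi e2
    · exact hp0 h
  · set A : W →ₗ[ℝ] W := a1 • J1 + a2 • J2 + a3 • J3 with hA
    have hAapp : ∀ z, A z = a1 • J1 z + a2 • J2 z + a3 • J3 z := by
      intro z; simp [hA]
    have hsA : ∀ z, s (A z) = A (s z) := by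
      intro z
      rw [hAapp z, hAapp (s z)]
      simp only [map_add, map_smul, hs1, hs2, hs3]
    have hcA : a1 ^ 2 + a2 ^ 2 + a3 ^ 2 ≠ 0 := by
      intro h
      exact hz ⟨sq_eq_zero_iff.mp (le_antisymm
          (by nlinarith [sq_nonneg a2, sq_nonneg a3]) (sq_nonneg a1)),
        sq_eq_zero_iff.mp (le_antisymm
          (by nlinarith [sq_nonneg a1, sq_nonneg a3]) (sq_nonneg a2)),
        sq_eq_zero_iff.mp (le_antisymm
          (by nlinarith [sq_nonneg a1, sq_nonneg a2]) (sq_nonneg a3))⟩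
    have hAA : ∀ z, A (A z) = -(a1 ^ 2 + a2 ^ 2 + a3 ^ 2) • z := by
      intro z
      rw [hAapp z, hAapp]
      simp only [map_add, map_smul, hJ1sq, hJ2sq, hJ3sq, hq12, hq23, hq31, hq21,
        hq32, hq13]
      module
    have hsU : ∀ w ∈ Vsᗮ, s w = -(A w) := by
      intro w hw
      have h0 := hπapp w
      rw [htriv x w hw] at h0
      rw [hAapp]
      linear_combination (norm := module) -h0
    have hOdim := Vs.finrank_add_finrank_orthogonal
    have hdimU : Module.finrank ℝ W < 2 * Module.finrank ℝ Vsᗮ := by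
      rw [hV2, hdim] at hOdim
      rw [hdim]
      omega
    by_cases h12 : a1 = 0 ∧ a2 = 0
    · obtain ⟨z1, z2⟩ := h12
      have hanti : ∀ z, A (J1 z) = -(J1 (A z)) := by
        intro z
        rw [hAapp (J1 z), hAapp z]
        simp only [z1, z2, zero_smul, zero_add, map_smul, hq31, hq13]
        module
      have hBB : ∀ z, J1 (J1 z) = -(1 : ℝ) • z := by
        intro z; rw [hJ1sq]; module
      exact quat_aux Vsᗮ s A J1 (a1 ^ 2 + a2 ^ 2 + a3 ^ 2) 1 hcA one_ne_zero
        hAA hBB hanti hs1 hsU hdimU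
    · set B : W →ₗ[ℝ] W := a2 • J1 + (-a1) • J2 with hB
      have hBapp : ∀ z, B z = a2 • J1 z + (-a1) • J2 z := by
        intro z; simp [hB]
      have hcB : a1 ^ 2 + a2 ^ 2 ≠ 0 := by
        intro h
        exact h12 ⟨sq_eq_zero_iff.mp (le_antisymm
            (by nlinarith [sq_nonneg a2]) (sq_nonneg a1)),
          sq_eq_zero_iff.mp (le_antisymm
            (by nlinarith [sq_nonneg a1]) (sq_nonneg a2))⟩
      have hBB : ∀ z, B (B z) = -(a1 ^ 2 + a2 ^ 2) • z := by
        intro z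
        rw [hBapp z, hBapp]
        simp only [map_add, map_smul, hJ1sq, hJ2sq, hq12, hq21]
        module
      have hanti : ∀ z, A (B z) = -(B (A z)) := by
        intro z
        rw [hBapp z, hAapp, hAapp z, hBapp]
        simp only [map_add, map_smul, hJ1sq, hJ2sq, hJ3sq, hq12, hq23, hq31, hq21,
          hq32, hq13]
        module
      have hsB : ∀ z, s (B z) = B (s z) := by
        intro z
        rw [hBapp z, hBapp (s z)]
        simp only [map_add, map_smul, hs1, hs2]
      exact quat_aux Vsᗮ s A B (a1 ^ 2 + a2 ^ 2 + a3 ^ 2) (a1 ^ 2 + a2 ^ 2) hcA hcB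
        hAA hBB hanti hsB hsU hdimU
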